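/- Let A, B be complex n×n matrices with rank(A, B) = n and AB† = BA†, and let γ > 0 be real. Then the transition matrix T = -(A - iγB)⁻¹(A + iγB) is unitary. -/

import Mathlib

open Matrix

/-- The vertex transition matrix `T = -(A - iγB)⁻¹(A + iγB)` is unitary when
`(A,B)` has rank `n`, `ABᴴ = BAᴴ` and `γ > 0`. -/
theorem transition_matrix_unitary (n : ℕ) (A B : Matrix (Fin n) (Fin n) ℂ)
    (hrank : (Matrix.fromCols A B).rank = n)
    (hherm : A * Bᴴ = B * Aᴴ)
    (γ : ℝ) (hγ : 0 < γ) :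
    -((A - ((γ : ℂ) * Complex.I) • B)⁻¹ * (A + ((γ : ℂ) * Complex.I) • B)) ∈
      Matrix.unitaryGroup (Fin n) ℂ := by
  set c : ℂ := (γ : ℂ) * Complex.I with hc
  set M : Matrix (Fin n) (Fin n) ℂ := A - c • B with hM
  set N : Matrix (Fin n) (Fin n) ℂ := A + c • B with hN
  have hc2 : c * c = -((γ : ℂ) ^ 2) := by
    rw [hc]; ring_nf; rw [Complex.I_sq]; ring
  have hstarc : star c = -c := by
    simp [hc, Complex.ext_iff]
  -- M Mᴴ = A Aᴴ + γ² B Bᴴ = N Nᴴ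
  have hMM : M * Mᴴ = A * Aᴴ + ((γ : ℂ) ^ 2) • (B * Bᴴ) := by
    have expand : M * Mᴴ
        = A * Aᴴ + c • (A * Bᴴ) - c • (B * Aᴴ) - (c * c) • (B * Bᴴ) := by
      rw [hM]
      simp only [conjTranspose_sub, conjTranspose_smul, hstarc, neg_smul, sub_neg_eq_add, smul_add, smul_sub,
        Matrix.sub_mul, Matrix.mul_add, smul_mul_assoc, mul_smul_comm, smul_smul]
      abel
    rw [expand, hherm, hc2, neg_smul, sub_neg_eq_add]
    abel
  have hNN : N * Nᴴ = A * Aᴴ + ((γ : ℂ) ^ 2) • (B * Bᴴ) := by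
    have expand : N * Nᴴ
        = A * Aᴴ - c • (A * Bᴴ) + c • (B * Aᴴ) - (c * c) • (B * Bᴴ) := by
      rw [hN]
      simp only [conjTranspose_add, conjTranspose_smul, hstarc, neg_smul, sub_neg_eq_add, smul_add, smul_sub,
        Matrix.add_mul, Matrix.mul_add, smul_mul_assoc, mul_smul_comm, smul_smul,
        mul_neg, neg_neg]
      abel
    rw [expand, hherm, hc2, neg_smul, sub_neg_eq_add]
    abel
  -- rows of (A,B) are linearly independent, so vecMul by it is injective
  have hli : LinearIndependent ℂ (fun i => (Matrix.fromCols A B) i) :=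
    linearIndependent_iff_card_eq_finrank_span.mpr <| by
      show Fintype.card (Fin n)
        = Module.finrank ℂ (Submodule.span ℂ (Set.range (Matrix.fromCols A B).row))
      rw [← Matrix.rank_eq_finrank_span_row, hrank, Fintype.card_fin]
  have hinj : Function.Injective (Matrix.fromCols A B).vecMul :=
    Matrix.vecMul_injective_iff.mpr hli
  -- M*Mᴴ has injective mulVec
  have hPinj : Function.Injective (M * Mᴴ).mulVec := by
    intro x y hxy
    suffices h : ∀ z, (M * Mᴴ) *ᵥ z = 0 → z = 0 by
      have := h (x - y) (by rw [Matrix.mulVec_sub, hxy, sub_self])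
      exact sub_eq_zero.mp this
    intro z hz
    have hdz : star z ⬝ᵥ (M * Mᴴ) *ᵥ z = 0 := by rw [hz, dotProduct_zero]
    rw [hMM] at hdz
    have hA0 : star z ⬝ᵥ (A * Aᴴ) *ᵥ z = star (Aᴴ *ᵥ z) ⬝ᵥ (Aᴴ *ᵥ z) := by
      rw [← Matrix.mulVec_mulVec, Matrix.dotProduct_mulVec, Matrix.star_mulVec,
        conjTranspose_conjTranspose]
    have hB0 : star z ⬝ᵥ (B * Bᴴ) *ᵥ z = star (Bᴴ *ᵥ z) ⬝ᵥ (Bᴴ *ᵥ z) := by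
      rw [← Matrix.mulVec_mulVec, Matrix.dotProduct_mulVec, Matrix.star_mulVec,
        conjTranspose_conjTranspose]
    have hre : ∀ w : Fin n → ℂ, star w ⬝ᵥ w = ((∑ i, Complex.normSq (w i) : ℝ) : ℂ) := by
      intro w
      simp [dotProduct, Complex.normSq_eq_conj_mul_self]
    rw [Matrix.add_mulVec, dotProduct_add, Matrix.smul_mulVec,
      dotProduct_smul, hA0, hB0, hre, hre] at hdz
    set a : ℝ := ∑ i, Complex.normSq ((Aᴴ *ᵥ z) i) with ha
    set b : ℝ := ∑ i, Complex.normSq ((Bᴴ *ᵥ z) i) with hb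
    have ha0 : 0 ≤ a := Finset.sum_nonneg fun i _ => Complex.normSq_nonneg _
    have hb0 : 0 ≤ b := Finset.sum_nonneg fun i _ => Complex.normSq_nonneg _
    rw [smul_eq_mul] at hdz
    have hreal : a + γ ^ 2 * b = 0 := by exact_mod_cast hdz
    have hγ2 : (0:ℝ) < γ ^ 2 := pow_pos hγ 2
    have hbz : b = 0 := by nlinarith
    have haz : a = 0 := by nlinarith
    have hAz : Aᴴ *ᵥ z = 0 := by
      funext i
      have : Complex.normSq ((Aᴴ *ᵥ z) i) = 0 := by
        have := (Finset.sum_eq_zero_iff_of_nonneg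
          (fun i _ => Complex.normSq_nonneg ((Aᴴ *ᵥ z) i))).mp haz i (Finset.mem_univ i)
        exact this
      exact Complex.normSq_eq_zero.mp this
    have hBz : Bᴴ *ᵥ z = 0 := by
      funext i
      have : Complex.normSq ((Bᴴ *ᵥ z) i) = 0 := by
        have := (Finset.sum_eq_zero_iff_of_nonneg
          (fun i _ => Complex.normSq_nonneg ((Bᴴ *ᵥ z) i))).mp hbz i (Finset.mem_univ i)
        exact this
      exact Complex.normSq_eq_zero.mp this
    -- hence star z kills (A,B)
    have hvA : star z ᵥ* A = 0 := by
      have := congrArg star (Matrix.star_mulVec (M := Aᴴ) (v := z))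
      rw [hAz] at this
      simpa using this.symm
    have hvB : star z ᵥ* B = 0 := by
      have := congrArg star (Matrix.star_mulVec (M := Bᴴ) (v := z))
      rw [hBz] at this
      simpa using this.symm
    have : star z ᵥ* (Matrix.fromCols A B) = (0 : Fin n → ℂ) ᵥ* (Matrix.fromCols A B) := by
      rw [Matrix.vecMul_fromCols, Matrix.zero_vecMul, hvA, hvB]
      ext (_ | _) <;> simp
    have hz0 : star z = 0 := hinj this
    have := congrArg star hz0
    simpa using this
  have hPunit : IsUnit (M * Mᴴ) := Matrix.mulVec_injective_iff_isUnit.mp hPinj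
  have hMdet : IsUnit M.det := by
    have h1 : IsUnit (M * Mᴴ).det := hPunit.map (Matrix.detMonoidHom)
    rw [Matrix.det_mul] at h1
    exact isUnit_of_mul_isUnit_left h1
  have hMHdet : IsUnit Mᴴ.det := by rwa [Matrix.det_conjTranspose, isUnit_star]
  -- unitarity
  rw [Matrix.mem_unitaryGroup_iff]
  have hstar : star (-(M⁻¹ * N)) = -(Nᴴ * (Mᴴ)⁻¹) := by
    simp [Matrix.star_eq_conjTranspose, Matrix.conjTranspose_mul,
      Matrix.conjTranspose_nonsing_inv]
  show -(M⁻¹ * N) * star (-(M⁻¹ * N)) = 1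
  rw [hstar, neg_mul_neg, Matrix.mul_assoc, ← Matrix.mul_assoc N Nᴴ, hNN, ← hMM,
    Matrix.mul_assoc M Mᴴ, Matrix.mul_nonsing_inv _ hMHdet, Matrix.mul_one,
    Matrix.nonsing_inv_mul _ hMdet]
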